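/- arXiv:2503.12792 — 4 statements merged into one kernel-verified Lean document; each statement's English description precedes it below -/
import Mathlib

section
/- Inheritance of strong symmetry: let ρ = ∑_{i=1}^n p_i ρ_i where each p_i > 0, each ρ_i is positive semidefinite, and U is a unitary with U ρ = λ ρ for some unit-modulus scalar λ. Then U ρ_i = λ ρ_i for every i. -/
open scoped ComplexOrder
open Matrix in

private lemma sum_mulVec_aux {n : Type*} [Fintype n] {m : ℕ}
    (M : Fin m → Matrix n n ℂ) (v : n → ℂ) :
    (∑ i, M i) *ᵥ v = ∑ i, M i *ᵥ v := by
  induction (Finset.univ : Finset (Fin m)) using Finset.cons_induction with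
  | empty => simp [Matrix.zero_mulVec]
  | cons a s ha ih => simp [Finset.sum_insert ha, Matrix.add_mulVec, ih]

open Matrix in
private lemma dotProduct_sum_aux {n : Type*} [Fintype n] {m : ℕ}
    (u : n → ℂ) (w : Fin m → n → ℂ) :
    u ⬝ᵥ (∑ i, w i) = ∑ i, u ⬝ᵥ w i := by
  induction (Finset.univ : Finset (Fin m)) using Finset.cons_induction with
  | empty => simp
  | cons a s ha ih => simp [Finset.sum_insert ha, dotProduct_add, ih]

open Matrix in
/-- Inheritance of strong symmetry by members of an ensemble. -/
theorem strong_symmetry_inheritance {n : Type*} [Fintype n] [DecidableEq n] {m : ℕ}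
    (p : Fin m → ℝ) (hp : ∀ i, 0 < p i)
    (ρi : Fin m → Matrix n n ℂ) (hρi : ∀ i, (ρi i).PosSemidef)
    (U : Matrix n n ℂ) (hU : U ∈ Matrix.unitaryGroup n ℂ)
    (lam : ℂ) (hlam : ‖lam‖ = 1)
    (hsym : U * (∑ i, p i • ρi i) = lam • ∑ i, p i • ρi i) :
    ∀ i, U * ρi i = lam • ρi i := by
  intro j
  set ρ : Matrix n n ℂ := ∑ i, p i • ρi i with hρdef
  -- kernel inclusion
  have hker : ∀ v : n → ℂ, ρ *ᵥ v = 0 → ρi j *ᵥ v = 0 := by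
    intro v hv
    have h0 : star v ⬝ᵥ ρ *ᵥ v = 0 := by rw [hv, dotProduct_zero]
    have hexp : star v ⬝ᵥ ρ *ᵥ v
        = ∑ i, (p i : ℂ) * (star v ⬝ᵥ ρi i *ᵥ v) := by
      rw [hρdef, sum_mulVec_aux, dotProduct_sum_aux]
      congr 1
      funext i
      rw [Matrix.smul_mulVec, dotProduct_smul, Complex.real_smul]
    have hterm : ∀ i ∈ Finset.univ, (0:ℂ) ≤ (p i : ℂ) * (star v ⬝ᵥ ρi i *ᵥ v) := by
      intro i _
      exact mul_nonneg (by exact_mod_cast (hp i).le) ((hρi i).dotProduct_mulVec_nonneg v)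
    have hsum0 : ∑ i, (p i : ℂ) * (star v ⬝ᵥ ρi i *ᵥ v) = 0 := by
      rw [← hexp]; exact h0
    have hz : (p j : ℂ) * (star v ⬝ᵥ ρi j *ᵥ v) = 0 :=
      (Finset.sum_eq_zero_iff_of_nonneg hterm).mp hsum0 j (Finset.mem_univ j)
    have hpj : (p j : ℂ) ≠ 0 := by exact_mod_cast (hp j).ne'
    have : star v ⬝ᵥ ρi j *ᵥ v = 0 := by
      rcases mul_eq_zero.mp hz with h | h
      · exact absurd h hpj
      · exact h
    exact ((hρi j).dotProduct_mulVec_zero_iff v).mp this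
  -- ρ is Hermitian
  have hρH : ρ.IsHermitian := by
    rw [Matrix.IsHermitian, hρdef, Matrix.conjTranspose_sum]
    congr 1
    funext i
    ext a b
    simp [Matrix.conjTranspose_apply, (hρi i).1.apply]
  -- conjTranspose of the symmetry
  have hsymT : ρ * Uᴴ = (starRingEnd ℂ) lam • ρ := by
    have := congrArg Matrix.conjTranspose hsym
    rwa [Matrix.conjTranspose_mul, Matrix.conjTranspose_smul, hρH.eq] at this
  -- apply kernel inclusion to Uᴴ v - conj lam • v
  have hvec : ∀ v : n → ℂ, ρi j *ᵥ (Uᴴ *ᵥ v) = (starRingEnd ℂ) lam • (ρi j *ᵥ v) := by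
    intro v
    have h1 : ρ *ᵥ (Uᴴ *ᵥ v - (starRingEnd ℂ) lam • v) = 0 := by
      rw [Matrix.mulVec_sub, Matrix.mulVec_smul, Matrix.mulVec_mulVec, hsymT,
        Matrix.smul_mulVec, sub_self]
    have h2 := hker _ h1
    rw [Matrix.mulVec_sub, Matrix.mulVec_smul, sub_eq_zero] at h2
    exact h2
  have hmat : ρi j * Uᴴ = (starRingEnd ℂ) lam • ρi j := by
    apply Matrix.toLin'.injective
    apply LinearMap.ext
    intro v
    simp only [Matrix.toLin'_apply, Matrix.smul_mulVec]
    rw [← Matrix.mulVec_mulVec]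
    exact hvec v
  have hfin := congrArg Matrix.conjTranspose hmat
  rw [Matrix.conjTranspose_mul, Matrix.conjTranspose_conjTranspose,
    Matrix.conjTranspose_smul, (hρi j).1.eq] at hfin
  simpa using hfin
end

section
/- Inheritance of strong symmetry under extensions: let ρ̃ be a positive semidefinite operator on H ⊗ H' whose partial trace over H' equals ρ, and let g be a unitary on H with g ρ = λ ρ for unit-modulus λ. Then (g ⊗ 1_{H'}) ρ̃ = λ ρ̃. -/
open scoped ComplexOrder
open Kronecker

lemma aux_trace_zero {p q : Type*} [Fintype p] [Fintype q]
    (N : Matrix p q ℂ) (h : (N * N.conjTranspose).trace = 0) : N = 0 := by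
  have key : ∀ i, ((N * N.conjTranspose) i i) = ∑ j, Complex.normSq (N i j) := by
    intro i
    simp [Matrix.mul_apply, Matrix.conjTranspose_apply, Complex.mul_conj]
  have h2 : (∑ i, ∑ j, (Complex.normSq (N i j) : ℝ)) = 0 := by
    have := h
    rw [Matrix.trace] at this
    simp only [Matrix.diag_apply] at this
    rw [Finset.sum_congr rfl fun i _ => key i] at this
    push_cast at this
    exact_mod_cast this
  have hnn : ∀ i ∈ (Finset.univ : Finset p), 0 ≤ ∑ j, Complex.normSq (N i j) :=
    fun i _ => Finset.sum_nonneg fun j _ => Complex.normSq_nonneg _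
  have h4 := (Finset.sum_eq_zero_iff_of_nonneg hnn).mp h2
  ext i j
  have h6 := h4 i (Finset.mem_univ i)
  have h5 := (Finset.sum_eq_zero_iff_of_nonneg
    (fun (j : q) _ => Complex.normSq_nonneg (N i j))).mp h6 j (Finset.mem_univ j)
  simpa using Complex.normSq_eq_zero.mp h5

noncomputable def ptraceRight {m m' : Type*} [Fintype m'] (ρ : Matrix (m × m') (m × m') ℂ) :
    Matrix m m ℂ :=
  Matrix.of fun a b => ∑ x : m', ρ (a, x) (b, x)

lemma aux_trace_kron {m m' : Type*} [Fintype m] [DecidableEq m] [Fintype m'] [DecidableEq m']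
    (g : Matrix m m ℂ) (ρt : Matrix (m × m') (m × m') ℂ) :
    ((g ⊗ₖ (1 : Matrix m' m' ℂ)) * ρt).trace = (g * ptraceRight ρt).trace := by
  simp only [Matrix.trace, Matrix.diag_apply, Matrix.mul_apply, ptraceRight, Matrix.of_apply,
    Matrix.kroneckerMap_apply, Matrix.one_apply, mul_ite, mul_one, mul_zero, ite_mul, zero_mul,
    Fintype.sum_prod_type, Finset.sum_ite_eq, Finset.mem_univ, if_true, Finset.mul_sum]
  exact Finset.sum_congr rfl fun a _ => Finset.sum_comm

lemma aux_trace_pt {m m' : Type*} [Fintype m] [Fintype m']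
    (ρt : Matrix (m × m') (m × m') ℂ) : (ptraceRight ρt).trace = ρt.trace := by
  simp [Matrix.trace, ptraceRight, Fintype.sum_prod_type]

/-- extensions inherit strong symmetries. -/
theorem strong_symmetry_extension {m m' : Type*} [Fintype m] [DecidableEq m]
    [Fintype m'] [DecidableEq m']
    (ρt : Matrix (m × m') (m × m') ℂ) (hρt : ρt.PosSemidef)
    (ρ : Matrix m m ℂ) (hpt : ptraceRight ρt = ρ)
    (g : Matrix m m ℂ) (hg : g ∈ Matrix.unitaryGroup m ℂ)
    (lam : ℂ) (hlam : ‖lam‖ = 1) (hsym : g * ρ = lam • ρ) :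
    (g ⊗ₖ (1 : Matrix m' m' ℂ)) * ρt = lam • ρt := by
  set U : Matrix (m × m') (m × m') ℂ := g ⊗ₖ (1 : Matrix m' m' ℂ) with hU
  have hUH : U.conjTranspose = (g.conjTranspose) ⊗ₖ (1 : Matrix m' m' ℂ) := by
    ext ⟨a, x⟩ ⟨b, y⟩
    simp only [hU, Matrix.conjTranspose_apply, Matrix.kroneckerMap_apply, Matrix.one_apply,
      star_mul', star_one, star_zero]
    by_cases h : x = y <;> simp [h, eq_comm]
  have hUU : U.conjTranspose * U = 1 := by
    rw [hUH, hU, ← Matrix.mul_kronecker_mul, Matrix.one_mul]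
    have : g.conjTranspose * g = 1 := hg.1
    rw [this, Matrix.one_kronecker_one]
  -- trace facts
  have hconj : lam * (starRingEnd ℂ) lam = 1 := by
    have h1 : Complex.normSq lam = 1 := by
      rw [Complex.normSq_eq_norm_sq, hlam]; norm_num
    rw [Complex.mul_conj]
    exact_mod_cast h1
  have htrρt_real : (starRingEnd ℂ) ρt.trace = ρt.trace := by
    have := Matrix.trace_conjTranspose ρt
    rw [hρt.1] at this
    exact this.symm
  have htrU : (U * ρt).trace = lam * ρt.trace := by
    rw [hU, aux_trace_kron, hpt, hsym]
    simp [Matrix.trace_smul, ← hpt, aux_trace_pt]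
  -- the key trace-zero computation
  obtain ⟨S, hSH, hSS⟩ : ∃ S : Matrix (m × m') (m × m') ℂ, S.conjTranspose = S ∧ S * S = ρt := by
    open scoped MatrixOrder in
    exact ⟨CFC.sqrt ρt, (Matrix.nonneg_iff_posSemidef.mp (CFC.sqrt_nonneg ρt)).1, CFC.sqrt_mul_sqrt_self ρt hρt.nonneg⟩
  set D : Matrix (m × m') (m × m') ℂ := U - lam • 1 with hD
  have hDS : ((D * S) * (D * S).conjTranspose).trace = 0 := by
    have hexp : (D * S) * (D * S).conjTranspose = D * ρt * D.conjTranspose := by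
      rw [Matrix.conjTranspose_mul, hSH, Matrix.mul_assoc, ← Matrix.mul_assoc S,
        hSS, Matrix.mul_assoc]
    have hDH : D.conjTranspose = U.conjTranspose - (starRingEnd ℂ) lam • 1 := by
      simp [hD, Matrix.conjTranspose_smul]
    have expand : D * ρt * D.conjTranspose
        = U * ρt * U.conjTranspose - (starRingEnd ℂ) lam • (U * ρt)
          - lam • (ρt * U.conjTranspose) + (lam * (starRingEnd ℂ) lam) • ρt := by
      rw [hD, hDH]
      simp only [sub_mul, mul_sub, smul_mul_assoc, mul_smul_comm, one_mul, mul_one, smul_smul,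
        smul_sub]
      module
    have t1 : (U * ρt * U.conjTranspose).trace = ρt.trace := by
      rw [Matrix.trace_mul_comm, ← Matrix.mul_assoc, hUU, Matrix.one_mul]
    have t3 : (ρt * U.conjTranspose).trace = (starRingEnd ℂ) lam * ρt.trace := by
      have h9 : (ρt * U.conjTranspose) = (U * ρt).conjTranspose := by
        rw [Matrix.conjTranspose_mul, hρt.1]
      rw [h9, Matrix.trace_conjTranspose, htrU]
      simp only [star_mul']
      rw [show star ρt.trace = ρt.trace from htrρt_real]
      rfl
    rw [hexp, expand]
    simp only [Matrix.trace_sub, Matrix.trace_add, Matrix.trace_smul, smul_eq_mul]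
    rw [t1, htrU, t3]
    linear_combination (-ρt.trace) * hconj
  have hDS0 : D * S = 0 := aux_trace_zero _ hDS
  have : D * ρt = 0 := by
    rw [← hSS, ← Matrix.mul_assoc, hDS0, Matrix.zero_mul]
  rw [hD, Matrix.sub_mul, Matrix.smul_mul, Matrix.one_mul, sub_eq_zero] at this
  exact this
end

section
/- Symmetry pullback: let E(σ) = Tr_A[U (σ ⊗ |0⟩⟨0|_A) U†] be a quantum channel given in Stinespring dilated form with U unitary on H_Q ⊗ H_A. If ρ is a density matrix on H_Q and g is a unitary on H_Q with g E(ρ) = λ E(ρ) for unit-modulus λ, then U† (g ⊗ 1_A) U (ρ ⊗ |0⟩⟨0|_A) = λ (ρ ⊗ |0⟩⟨0|_A). -/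
open scoped ComplexOrder
open Kronecker Matrix

/-- The outer product |v⟩⟨v|. -/
noncomputable def outer {n : Type*} (v : n → ℂ) : Matrix n n ℂ :=
  Matrix.vecMulVec v (star v)

lemma trace_conjTranspose_mul_self_eq_zero_iff {m n : Type*} [Fintype m] [Fintype n]
    (X : Matrix m n ℂ) : (Xᴴ * X).trace = 0 ↔ X = 0 := by
  constructor
  · intro h
    have key : (Xᴴ * X).trace = ∑ j : n, ∑ i : m, ((Complex.normSq (X i j) : ℝ) : ℂ) := by
      simp [Matrix.trace, Matrix.diag, Matrix.mul_apply, Matrix.conjTranspose_apply,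
        Complex.normSq_eq_conj_mul_self]
    rw [key] at h
    have h' : ((∑ j : n, ∑ i : m, Complex.normSq (X i j) : ℝ) : ℂ) = 0 := by
      push_cast; exact h
    have hre : ∑ j : n, ∑ i : m, Complex.normSq (X i j) = 0 := by exact_mod_cast h'
    have h1 := (Finset.sum_eq_zero_iff_of_nonneg (fun j _ =>
      Finset.sum_nonneg (fun i _ => Complex.normSq_nonneg _))).mp hre
    ext i j
    have h2 := (Finset.sum_eq_zero_iff_of_nonneg (fun i _ =>
      Complex.normSq_nonneg (X i j))).mp (h1 j (Finset.mem_univ j)) i (Finset.mem_univ i)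
    simpa using Complex.normSq_eq_zero.mp h2
  · intro h; simp [h]

lemma kronecker_conjTranspose' {l m p q : Type*}
    (A : Matrix l m ℂ) (B : Matrix p q ℂ) : (A ⊗ₖ B)ᴴ = Aᴴ ⊗ₖ Bᴴ := by
  ext ⟨a, x⟩ ⟨b, y⟩
  simp [Matrix.conjTranspose_apply, Matrix.kroneckerMap_apply, mul_comm]

/-- symmetry pullback through a Stinespring-dilated channel
E(σ) = Tr_A[U (σ ⊗ |0⟩⟨0|_A) U†]. -/
theorem symmetry_pullback {nQ nA : Type*} [Fintype nQ] [DecidableEq nQ]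
    [Fintype nA] [DecidableEq nA]
    (U : Matrix (nQ × nA) (nQ × nA) ℂ) (hU : U ∈ Matrix.unitaryGroup (nQ × nA) ℂ)
    (v : nA → ℂ) (hv : star v ⬝ᵥ v = 1)
    (ρ : Matrix nQ nQ ℂ) (hρ : ρ.PosSemidef ∧ ρ.trace = 1)
    (g : Matrix nQ nQ ℂ) (hg : g ∈ Matrix.unitaryGroup nQ ℂ)
    (lam : ℂ) (hlam : ‖lam‖ = 1)
    (hsym : g * ptraceRight (U * (ρ ⊗ₖ outer v) * Uᴴ)
          = lam • ptraceRight (U * (ρ ⊗ₖ outer v) * Uᴴ)) :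
    Uᴴ * (g ⊗ₖ (1 : Matrix nA nA ℂ)) * U * (ρ ⊗ₖ outer v)
      = lam • (ρ ⊗ₖ outer v) := by
  have hUl : Uᴴ * U = 1 := by
    have := hU.1; rwa [Matrix.star_eq_conjTranspose] at this
  have hUr : U * Uᴴ = 1 := by
    have := hU.2; rwa [Matrix.star_eq_conjTranspose] at this
  have hgl : gᴴ * g = 1 := by
    have := hg.1; rwa [Matrix.star_eq_conjTranspose] at this
  set P : Matrix (nQ × nA) (nQ × nA) ℂ := ρ ⊗ₖ outer v with hP
  set σ : Matrix (nQ × nA) (nQ × nA) ℂ := U * P * Uᴴ with hσ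
  set M : Matrix (nQ × nA) (nQ × nA) ℂ := g ⊗ₖ (1 : Matrix nA nA ℂ) with hM
  -- P is PSD
  have houter : outer v = (Matrix.replicateRow Unit (star v))ᴴ * (Matrix.replicateRow Unit (star v)) := by
    ext i j
    simp [outer, Matrix.vecMulVec_apply, Matrix.mul_apply, Matrix.conjTranspose_apply,
      Matrix.replicateRow_apply]
  have hPpsd : P.PosSemidef := by
    obtain ⟨S, hS⟩ : ∃ S : Matrix nQ nQ ℂ, ρ = Sᴴ * S := by
      open MatrixOrder in
      exact CStarAlgebra.nonneg_iff_eq_star_mul_self.mp (Matrix.PosSemidef.nonneg hρ.1)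
    have : P = (S ⊗ₖ Matrix.replicateRow Unit (star v))ᴴ * (S ⊗ₖ Matrix.replicateRow Unit (star v)) := by
      rw [hP, kronecker_conjTranspose', ← Matrix.mul_kronecker_mul, ← hS, ← houter]
    rw [this]
    exact Matrix.posSemidef_conjTranspose_mul_self _
  have hσpsd : σ.PosSemidef := hPpsd.mul_mul_conjTranspose_same U
  -- traces
  have htrP : P.trace = 1 := by
    rw [hP, Matrix.trace_kronecker, hρ.2, one_mul]
    simpa [outer, Matrix.trace, Matrix.diag, Matrix.vecMulVec_apply, dotProduct,
      mul_comm] using hv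
  have htrσ : σ.trace = 1 := by
    rw [hσ, Matrix.trace_mul_comm, ← Matrix.mul_assoc, hUl, Matrix.one_mul, htrP]
  have htrpt : (ptraceRight σ).trace = σ.trace := by
    simp [ptraceRight, Matrix.trace, Matrix.diag, Fintype.sum_prod_type]
  -- Tr(M σ) = Tr(g ⬝ ptraceRight σ)
  have hkey : (M * σ).trace = (g * ptraceRight σ).trace := by
    simp only [hM, Matrix.trace, Matrix.diag, Matrix.mul_apply, ptraceRight, Matrix.of_apply,
      Matrix.kroneckerMap_apply, Fintype.sum_prod_type, Matrix.one_apply, mul_ite, mul_one,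
      mul_zero, ite_mul, zero_mul, Finset.sum_ite_eq, Finset.mem_univ, if_true,
      Finset.mul_sum]
    exact Finset.sum_congr rfl fun x _ =>
      Finset.sum_comm (f := fun y b => g x b * σ (b, y) (x, y))
  have htrMσ : (M * σ).trace = lam := by
    rw [hkey, hsym, Matrix.trace_smul, htrpt, htrσ]
    simp
  -- M is unitary
  have hMl : Mᴴ * M = 1 := by
    rw [hM, kronecker_conjTranspose', ← Matrix.mul_kronecker_mul, hgl,
      Matrix.conjTranspose_one, Matrix.one_mul, Matrix.one_kronecker_one]
  -- square root
  obtain ⟨B, hBh, hBB⟩ : ∃ B : Matrix (nQ × nA) (nQ × nA) ℂ, Bᴴ = B ∧ B * B = σ :=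
    open MatrixOrder in
    ⟨CFC.sqrt σ, (CFC.sqrt_nonneg σ).posSemidef.1, CFC.sqrt_mul_sqrt_self σ hσpsd.nonneg⟩
  have hll : lam * (starRingEnd ℂ) lam = 1 := by
    rw [Complex.mul_conj]
    norm_cast
    simp [Complex.normSq_eq_norm_sq, hlam]
  set X : Matrix (nQ × nA) (nQ × nA) ℂ := M * B - lam • B with hX
  have htr1 : (B * (M * B)).trace = lam := by
    rw [Matrix.trace_mul_comm, Matrix.mul_assoc, hBB, htrMσ]
  have htr2 : (B * (Mᴴ * B)).trace = (starRingEnd ℂ) lam := by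
    have e : (B * (Mᴴ * B)) = (B * (M * B))ᴴ := by
      rw [Matrix.conjTranspose_mul, Matrix.conjTranspose_mul, hBh, Matrix.mul_assoc]
    rw [e, Matrix.trace_conjTranspose, htr1]
    rfl
  have htr3 : (B * (Mᴴ * (M * B))).trace = 1 := by
    rw [Matrix.trace_mul_comm, Matrix.mul_assoc, Matrix.mul_assoc, hBB, ← Matrix.mul_assoc,
      ← Matrix.mul_assoc, hMl, Matrix.one_mul, htrσ]
  have htrBB : (B * B).trace = 1 := by rw [hBB, htrσ]
  have hXzero : X = 0 := by
    rw [← _root_.trace_conjTranspose_mul_self_eq_zero_iff]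
    have hXH : Xᴴ = B * Mᴴ - (starRingEnd ℂ) lam • B := by
      rw [hX, Matrix.conjTranspose_sub, Matrix.conjTranspose_mul, Matrix.conjTranspose_smul, hBh]
      rfl
    rw [hXH, hX]
    rw [Matrix.sub_mul, Matrix.mul_sub, Matrix.mul_sub]
    simp only [Matrix.smul_mul, Matrix.mul_smul, Matrix.trace_sub, Matrix.trace_smul,
      smul_smul, smul_eq_mul, Matrix.mul_assoc]
    rw [htr3, htr2, htr1, htrBB, mul_comm ((starRingEnd ℂ) lam) lam, hll]
    ring
  have hMB : M * B = lam • B := sub_eq_zero.mp hXzero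
  have hMσ : M * σ = lam • σ := by
    rw [← hBB, ← Matrix.mul_assoc, hMB, Matrix.smul_mul]
  -- finish
  calc Uᴴ * M * U * P
      = Uᴴ * M * U * P * (Uᴴ * U) := by rw [hUl, Matrix.mul_one]
    _ = Uᴴ * (M * (U * P * Uᴴ)) * U := by simp only [Matrix.mul_assoc]
    _ = Uᴴ * (lam • (U * P * Uᴴ)) * U := by rw [← hσ, hMσ]
    _ = lam • (Uᴴ * U * (P * (Uᴴ * U))) := by
        simp only [Matrix.mul_smul, Matrix.smul_mul, Matrix.mul_assoc]
    _ = lam • P := by rw [hUl]; simp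
end

section
/- For a fixed unitary U on H_Q ⊗ H_A and fixed density matrix ρ on H_Q, the map g ↦ U† (g ⊗ 1_A) U is an injective group homomorphism from the unitary group of H_Q into the unitary group of H_Q ⊗ H_A, and it maps the strong symmetry group of E(ρ) (unitaries g with g E(ρ) a unit scalar times E(ρ)) into the strong symmetry group of ρ ⊗ |0⟩⟨0|_A, preserving the scalar (charge). -/
open scoped ComplexOrder
open Kronecker Matrix

lemma kron_conjT {l m n p : Type*} (A : Matrix l m ℂ) (B : Matrix n p ℂ) :
    (A ⊗ₖ B)ᴴ = Aᴴ ⊗ₖ Bᴴ := by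
  ext ⟨i,x⟩ ⟨j,y⟩
  simp [Matrix.conjTranspose_apply, Matrix.kroneckerMap_apply, _root_.map_mul]

lemma trace_ptraceRight {m m' : Type*} [Fintype m] [Fintype m']
    (M : Matrix (m × m') (m × m') ℂ) : (ptraceRight M).trace = M.trace := by
  simp [ptraceRight, Matrix.trace, Matrix.diag, Fintype.sum_prod_type]

lemma kron_one_mul_trace {m m' : Type*} [Fintype m] [Fintype m'] [DecidableEq m']
    (A : Matrix m m ℂ) (M : Matrix (m × m') (m × m') ℂ) :
    ((A ⊗ₖ (1 : Matrix m' m' ℂ)) * M).trace = (A * ptraceRight M).trace := by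
  simp only [Matrix.trace, Matrix.diag, Matrix.mul_apply, ptraceRight, Matrix.of_apply,
    Fintype.sum_prod_type, Matrix.kroneckerMap_apply, Matrix.one_apply, mul_ite, mul_one, mul_zero,
    ite_mul, zero_mul, Finset.sum_ite_eq, Finset.mem_univ, if_true, Finset.mul_sum]
  exact Finset.sum_congr rfl fun x _ => Finset.sum_comm

lemma eq_zero_of_trace_conjT_mul_self {m n : Type*} [Fintype m] [Fintype n]
    (M : Matrix m n ℂ) (h : (Mᴴ * M).trace = 0) : M = 0 := by
  have key : ∑ j : n, ∑ i : m, Complex.normSq (M i j) = 0 := by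
    have h2 : ((∑ j : n, ∑ i : m, Complex.normSq (M i j) : ℝ) : ℂ) = 0 := by
      push_cast
      rw [← h]
      simp [Matrix.trace, Matrix.diag, Matrix.mul_apply, Matrix.conjTranspose_apply,
        Complex.normSq_eq_conj_mul_self]
    exact_mod_cast h2
  ext i j
  have h3 := (Finset.sum_eq_zero_iff_of_nonneg (fun j _ =>
    Finset.sum_nonneg fun i _ => Complex.normSq_nonneg _)).mp key j (Finset.mem_univ j)
  have h4 := (Finset.sum_eq_zero_iff_of_nonneg (fun i _ =>
    Complex.normSq_nonneg _)).mp h3 i (Finset.mem_univ i)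
  simpa using Complex.normSq_eq_zero.mp h4

set_option maxHeartbeats 1000000 in
/-- g ↦ U† (g ⊗ 1) U is an injective group homomorphism of unitary groups
which maps the strong symmetry group of E(ρ) into that of ρ ⊗ |0⟩⟨0|, preserving the charge. -/
theorem symmetry_pullback_hom {nQ nA : Type*} [Fintype nQ] [DecidableEq nQ]
    [Fintype nA] [DecidableEq nA]
    (U : Matrix (nQ × nA) (nQ × nA) ℂ) (hU : U ∈ Matrix.unitaryGroup (nQ × nA) ℂ)
    (v : nA → ℂ) (hv : star v ⬝ᵥ v = 1)
    (ρ : Matrix nQ nQ ℂ) (hρ : ρ.PosSemidef ∧ ρ.trace = 1) :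
    ∃ φ : Matrix.unitaryGroup nQ ℂ →* Matrix.unitaryGroup (nQ × nA) ℂ,
      (∀ g : Matrix.unitaryGroup nQ ℂ,
        (φ g : Matrix (nQ × nA) (nQ × nA) ℂ)
          = Uᴴ * ((g : Matrix nQ nQ ℂ) ⊗ₖ (1 : Matrix nA nA ℂ)) * U) ∧
      Function.Injective φ ∧
      (∀ (g : Matrix.unitaryGroup nQ ℂ) (lam : ℂ), ‖lam‖ = 1 →
        (g : Matrix nQ nQ ℂ) * ptraceRight (U * (ρ ⊗ₖ outer v) * Uᴴ)
            = lam • ptraceRight (U * (ρ ⊗ₖ outer v) * Uᴴ) →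
        (φ g : Matrix (nQ × nA) (nQ × nA) ℂ) * (ρ ⊗ₖ outer v)
            = lam • (ρ ⊗ₖ outer v)) := by
  have hU1 : Uᴴ * U = 1 := by
    have := Matrix.mem_unitaryGroup_iff'.mp hU
    rwa [Matrix.star_eq_conjTranspose] at this
  have hU2 : U * Uᴴ = 1 := by
    have := Matrix.mem_unitaryGroup_iff.mp hU
    rwa [Matrix.star_eq_conjTranspose] at this
  -- unitarity of g ⊗ 1
  have hg1 : ∀ g : Matrix.unitaryGroup nQ ℂ, (g : Matrix nQ nQ ℂ)ᴴ * g = 1 := by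
    intro g
    have := Matrix.mem_unitaryGroup_iff'.mp g.2
    rwa [Matrix.star_eq_conjTranspose] at this
  have hg2 : ∀ g : Matrix.unitaryGroup nQ ℂ, (g : Matrix nQ nQ ℂ) * (g : Matrix nQ nQ ℂ)ᴴ = 1 := by
    intro g
    have := Matrix.mem_unitaryGroup_iff.mp g.2
    rwa [Matrix.star_eq_conjTranspose] at this
  have hWH : ∀ g : Matrix.unitaryGroup nQ ℂ,
      ((g : Matrix nQ nQ ℂ) ⊗ₖ (1 : Matrix nA nA ℂ))ᴴ
        = ((g : Matrix nQ nQ ℂ)ᴴ ⊗ₖ (1 : Matrix nA nA ℂ)) := by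
    intro g; rw [kron_conjT, Matrix.conjTranspose_one]
  have hWW : ∀ g : Matrix.unitaryGroup nQ ℂ,
      ((g : Matrix nQ nQ ℂ) ⊗ₖ (1 : Matrix nA nA ℂ))ᴴ
        * ((g : Matrix nQ nQ ℂ) ⊗ₖ (1 : Matrix nA nA ℂ)) = 1 := by
    intro g
    rw [hWH, ← Matrix.mul_kronecker_mul, hg1, Matrix.one_mul, Matrix.one_kronecker_one]
  have hWW2 : ∀ g : Matrix.unitaryGroup nQ ℂ,
      ((g : Matrix nQ nQ ℂ) ⊗ₖ (1 : Matrix nA nA ℂ))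
        * ((g : Matrix nQ nQ ℂ) ⊗ₖ (1 : Matrix nA nA ℂ))ᴴ = 1 := by
    intro g
    rw [hWH, ← Matrix.mul_kronecker_mul, hg2, Matrix.one_mul, Matrix.one_kronecker_one]
  have conj_cancel : ∀ X : Matrix (nQ × nA) (nQ × nA) ℂ, U * (Uᴴ * X * U) * Uᴴ = X := by
    intro X
    simp only [Matrix.mul_assoc]
    rw [hU2, Matrix.mul_one, ← Matrix.mul_assoc, hU2, Matrix.one_mul]
  have hmem : ∀ g : Matrix.unitaryGroup nQ ℂ,
      Uᴴ * ((g : Matrix nQ nQ ℂ) ⊗ₖ (1 : Matrix nA nA ℂ)) * U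
        ∈ Matrix.unitaryGroup (nQ × nA) ℂ := by
    intro g
    rw [Matrix.mem_unitaryGroup_iff', Matrix.star_eq_conjTranspose]
    have e : (Uᴴ * ((g : Matrix nQ nQ ℂ) ⊗ₖ (1 : Matrix nA nA ℂ)) * U)ᴴ
        = Uᴴ * ((g : Matrix nQ nQ ℂ) ⊗ₖ (1 : Matrix nA nA ℂ))ᴴ * U := by
      rw [Matrix.conjTranspose_mul, Matrix.conjTranspose_mul,
        Matrix.conjTranspose_conjTranspose, ← Matrix.mul_assoc]
    rw [e]
    calc Uᴴ * ((g : Matrix nQ nQ ℂ) ⊗ₖ (1 : Matrix nA nA ℂ))ᴴ * U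
        * (Uᴴ * ((g : Matrix nQ nQ ℂ) ⊗ₖ (1 : Matrix nA nA ℂ)) * U)
        = Uᴴ * (((g : Matrix nQ nQ ℂ) ⊗ₖ (1 : Matrix nA nA ℂ))ᴴ * ((U * Uᴴ)
            * (((g : Matrix nQ nQ ℂ) ⊗ₖ (1 : Matrix nA nA ℂ)) * U))) := by
          simp only [Matrix.mul_assoc]
      _ = 1 := by
          rw [hU2, Matrix.one_mul,
            ← Matrix.mul_assoc (((g : Matrix nQ nQ ℂ) ⊗ₖ (1 : Matrix nA nA ℂ))ᴴ)
              ((g : Matrix nQ nQ ℂ) ⊗ₖ (1 : Matrix nA nA ℂ)) U,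
            hWW g, Matrix.one_mul, hU1]
  -- the homomorphism
  refine ⟨{ toFun := fun g => ⟨Uᴴ * ((g : Matrix nQ nQ ℂ) ⊗ₖ (1 : Matrix nA nA ℂ)) * U, hmem g⟩,
            map_one' := ?_, map_mul' := ?_ }, fun g => rfl, ?_, ?_⟩
  · apply Subtype.ext
    show Uᴴ * (((1 : Matrix.unitaryGroup nQ ℂ) : Matrix nQ nQ ℂ) ⊗ₖ (1 : Matrix nA nA ℂ)) * U = 1
    rw [Matrix.UnitaryGroup.one_val, Matrix.one_kronecker_one, Matrix.mul_one, hU1]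
  · intro g h
    apply Subtype.ext
    show Uᴴ * (((g * h : Matrix.unitaryGroup nQ ℂ) : Matrix nQ nQ ℂ) ⊗ₖ (1 : Matrix nA nA ℂ)) * U
      = (Uᴴ * ((g : Matrix nQ nQ ℂ) ⊗ₖ (1 : Matrix nA nA ℂ)) * U)
        * (Uᴴ * ((h : Matrix nQ nQ ℂ) ⊗ₖ (1 : Matrix nA nA ℂ)) * U)
    rw [Matrix.UnitaryGroup.mul_val]
    have : ((g : Matrix nQ nQ ℂ) * (h : Matrix nQ nQ ℂ)) ⊗ₖ (1 : Matrix nA nA ℂ)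
        = ((g : Matrix nQ nQ ℂ) ⊗ₖ (1 : Matrix nA nA ℂ))
          * ((h : Matrix nQ nQ ℂ) ⊗ₖ (1 : Matrix nA nA ℂ)) := by
      rw [← Matrix.mul_kronecker_mul, Matrix.one_mul]
    rw [this]
    simp only [Matrix.mul_assoc]
    rw [← Matrix.mul_assoc U Uᴴ, hU2, Matrix.one_mul]
  -- injectivity
  · have hne : Nonempty nA := by
      by_contra hempty
      rw [not_nonempty_iff] at hempty
      simp [dotProduct] at hv
    obtain ⟨x0⟩ := hne
    intro g g' hgg
    have hcoe : Uᴴ * ((g : Matrix nQ nQ ℂ) ⊗ₖ (1 : Matrix nA nA ℂ)) * U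
        = Uᴴ * ((g' : Matrix nQ nQ ℂ) ⊗ₖ (1 : Matrix nA nA ℂ)) * U :=
      congrArg Subtype.val hgg
    have hW : ((g : Matrix nQ nQ ℂ) ⊗ₖ (1 : Matrix nA nA ℂ))
        = ((g' : Matrix nQ nQ ℂ) ⊗ₖ (1 : Matrix nA nA ℂ)) := by
      have := congrArg (fun X => U * X * Uᴴ) hcoe
      simpa only [conj_cancel] using this
    apply Subtype.ext
    ext a b
    have := congrFun (congrFun hW (a, x0)) (b, x0)
    simpa [Matrix.kroneckerMap_apply, Matrix.one_apply_eq] using this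
  -- charge preservation
  · intro g lam hl h
    set P : Matrix nA nA ℂ := outer v with hPdef
    have hv' : ∑ k, (starRingEnd ℂ) (v k) * v k = 1 := by
      simpa [dotProduct] using hv
    have hPH : Pᴴ = P := by
      ext i j
      simp [hPdef, outer, Matrix.conjTranspose_apply, Matrix.vecMulVec_apply, mul_comm]
    have hP2 : P * P = P := by
      ext i j
      simp only [hPdef, outer, Matrix.mul_apply, Matrix.vecMulVec_apply, Pi.star_apply,
        RCLike.star_def]
      calc ∑ k, v i * (starRingEnd ℂ) (v k) * (v k * (starRingEnd ℂ) (v j))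
          = (v i * (starRingEnd ℂ) (v j)) * ∑ k, (starRingEnd ℂ) (v k) * v k := by
            rw [Finset.mul_sum]; exact Finset.sum_congr rfl fun k _ => by ring
        _ = v i * (starRingEnd ℂ) (v j) := by rw [hv', mul_one]
    have trP : P.trace = 1 := by
      calc P.trace = ∑ i, v i * (starRingEnd ℂ) (v i) := by
            simp [hPdef, outer, Matrix.trace, Matrix.diag, Matrix.vecMulVec_apply]
        _ = ∑ i, (starRingEnd ℂ) (v i) * v i := Finset.sum_congr rfl fun i _ => mul_comm _ _
        _ = 1 := hv'
    open scoped MatrixOrder in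
    set s : Matrix nQ nQ ℂ := CFC.sqrt ρ with hsdef
    open scoped MatrixOrder in
    have hsH : sᴴ = s := (CFC.sqrt_nonneg ρ).posSemidef.1
    open scoped MatrixOrder in
    have hs : s * s = ρ := CFC.sqrt_mul_sqrt_self ρ hρ.1.nonneg
    set C : Matrix (nQ × nA) (nQ × nA) ℂ := s ⊗ₖ P with hCdef
    have hCH : Cᴴ = C := by rw [hCdef, kron_conjT, hsH, hPH]
    have hCC : C * C = ρ ⊗ₖ P := by rw [hCdef, ← Matrix.mul_kronecker_mul, hs, hP2]
    set D : Matrix (nQ × nA) (nQ × nA) ℂ := U * C with hDdef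
    set W : Matrix (nQ × nA) (nQ × nA) ℂ := (g : Matrix nQ nQ ℂ) ⊗ₖ (1 : Matrix nA nA ℂ)
      with hWdef
    have hWWg : Wᴴ * W = 1 := hWW g
    show Uᴴ * W * U * (ρ ⊗ₖ P) = lam • (ρ ⊗ₖ P)
    clear_value P s C D W
    have hDD : D * Dᴴ = U * (ρ ⊗ₖ P) * Uᴴ := by
      rw [hDdef, Matrix.conjTranspose_mul, hCH]
      calc U * C * (C * Uᴴ) = U * (C * C) * Uᴴ := by simp only [Matrix.mul_assoc]
        _ = U * (ρ ⊗ₖ P) * Uᴴ := by rw [hCC]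
    have trσ : (ρ ⊗ₖ P).trace = 1 := by rw [Matrix.trace_kronecker, hρ.2, trP, one_mul]
    have trDDH : (D * Dᴴ).trace = 1 := by
      rw [hDD, Matrix.trace_mul_cycle, hU1, Matrix.one_mul, trσ]
    have trDHD : (Dᴴ * D).trace = 1 := by rw [Matrix.trace_mul_comm, trDDH]
    have hTrW : (W * (D * Dᴴ)).trace = lam := by
      rw [hDD, hWdef, kron_one_mul_trace, h, Matrix.trace_smul, trace_ptraceRight,
        Matrix.trace_mul_cycle, hU1, Matrix.one_mul, trσ, smul_eq_mul, mul_one]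
    have hTrWH : (Wᴴ * (D * Dᴴ)).trace = (starRingEnd ℂ) lam := by
      have hDDH : (D * Dᴴ)ᴴ = D * Dᴴ := by
        rw [Matrix.conjTranspose_mul, Matrix.conjTranspose_conjTranspose]
      have e : Wᴴ * (D * Dᴴ) = ((D * Dᴴ) * W)ᴴ := by
        rw [Matrix.conjTranspose_mul, hDDH]
      rw [e, Matrix.trace_conjTranspose, Matrix.trace_mul_comm, hTrW]
      rfl
    have hconj : (starRingEnd ℂ) lam * lam = 1 := by
      have h1 : Complex.normSq lam = 1 := by
        rw [Complex.normSq_eq_norm_sq, hl]; norm_num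
      rw [← Complex.normSq_eq_conj_mul_self, h1]; norm_num
    have t1 : ((W * D)ᴴ * (W * D)).trace = 1 := by
      rw [Matrix.conjTranspose_mul, Matrix.mul_assoc, ← Matrix.mul_assoc Wᴴ W D, hWWg,
        Matrix.one_mul, trDHD]
    have t2 : ((W * D)ᴴ * D).trace = (starRingEnd ℂ) lam := by
      rw [Matrix.conjTranspose_mul, Matrix.trace_mul_cycle, Matrix.trace_mul_comm, hTrWH]
    have t3 : (Dᴴ * (W * D)).trace = lam := by
      rw [Matrix.trace_mul_comm, Matrix.mul_assoc, hTrW]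
    have hsplit : ((W * D - lam • D)ᴴ * (W * D - lam • D)).trace
        = ((W * D)ᴴ * (W * D)).trace - lam * ((W * D)ᴴ * D).trace
          - (starRingEnd ℂ) lam * (Dᴴ * (W * D)).trace
          + ((starRingEnd ℂ) lam * lam) * (Dᴴ * D).trace := by
      simp only [Matrix.conjTranspose_sub, Matrix.conjTranspose_smul, Matrix.sub_mul,
        Matrix.mul_sub, Matrix.smul_mul, Matrix.mul_smul, smul_smul, RCLike.star_def,
        Matrix.trace_sub, Matrix.trace_smul, smul_eq_mul]
      ring
    have hNtr : ((W * D - lam • D)ᴴ * (W * D - lam • D)).trace = 0 := by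
      rw [hsplit, t1, t2, t3, trDHD]
      linear_combination -hconj
    have hN0 : W * D - lam • D = 0 := eq_zero_of_trace_conjT_mul_self _ hNtr
    have hWD : W * D = lam • D := sub_eq_zero.mp hN0
    calc Uᴴ * W * U * (ρ ⊗ₖ P) = Uᴴ * W * U * (C * C) := by rw [hCC]
      _ = Uᴴ * (W * (U * C) * C) := by simp only [Matrix.mul_assoc]
      _ = Uᴴ * ((lam • D) * C) := by rw [← hDdef, hWD]
      _ = lam • (Uᴴ * (U * (C * C))) := by
          rw [Matrix.smul_mul, Matrix.mul_smul, hDdef, Matrix.mul_assoc]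
      _ = lam • (ρ ⊗ₖ P) := by rw [← Matrix.mul_assoc, hU1, Matrix.one_mul, hCC]
end
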